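/- Fix θ ∈ (−π/2, π/2) and let f : ℝ → ℝ be twice differentiable with f''(x) = 6·(sec θ)^{2/3} − 96·f(x)² for all x, f(0) = r₂(θ) and f'(0) = 0. Then f is even, i.e. f(−x) = f(x) for all x, and f is periodic with period 2·ρ₊(θ), i.e. f(x + 2·ρ₊(θ)) = f(x) for all x ∈ ℝ. -/

import Mathlib

open Real MeasureTheory

/-- `sec θ = (cos θ)⁻¹`. -/
noncomputable def sec (θ : ℝ) : ℝ := (Real.cos θ)⁻¹

/-- `r₁(θ) = (1/2)·sin(θ/3 − 2π/3)·(sec θ)^{1/3}`. -/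
noncomputable def r₁ (θ : ℝ) : ℝ :=
  (1/2) * Real.sin (θ/3 - 2*π/3) * (sec θ) ^ ((1:ℝ)/3)

/-- `r₂(θ) = (1/2)·sin(θ/3)·(sec θ)^{1/3}`. -/
noncomputable def r₂ (θ : ℝ) : ℝ :=
  (1/2) * Real.sin (θ/3) * (sec θ) ^ ((1:ℝ)/3)

/-- `r₃(θ) = (1/2)·sin(θ/3 + 2π/3)·(sec θ)^{1/3}`. -/
noncomputable def r₃ (θ : ℝ) : ℝ :=
  (1/2) * Real.sin (θ/3 + 2*π/3) * (sec θ) ^ ((1:ℝ)/3)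

/-- `ρ₊(θ)`, a Lebesgue integral over the open interval `(r₂(θ), r₃(θ))`. -/
noncomputable def ρp (θ : ℝ) : ℝ :=
  (1/8) * ∫ a in Set.Ioo (r₂ θ) (r₃ θ),
    ((r₃ θ - a) * (a - r₂ θ) * (a - r₁ θ)) ^ (-(1:ℝ)/2)

namespace SolEP

variable {θ : ℝ}

lemma cos_pos (hθ : θ ∈ Set.Ioo (-(π/2)) (π/2)) : 0 < Real.cos θ :=
  Real.cos_pos_of_mem_Ioo (by simpa using hθ)

lemma sec_pos (hθ : θ ∈ Set.Ioo (-(π/2)) (π/2)) : 0 < sec θ :=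
  inv_pos.2 (cos_pos hθ)

/-- `p θ = (sec θ)^(1/3)` -/
noncomputable def pc (θ : ℝ) : ℝ := (sec θ) ^ ((1:ℝ)/3)

lemma pc_pos (hθ : θ ∈ Set.Ioo (-(π/2)) (π/2)) : 0 < pc θ :=
  Real.rpow_pos_of_pos (sec_pos hθ) _

lemma S_eq (hθ : θ ∈ Set.Ioo (-(π/2)) (π/2)) : (sec θ) ^ ((2:ℝ)/3) = pc θ ^ 2 := by
  rw [pc, ← Real.rpow_natCast ((sec θ) ^ ((1:ℝ)/3)) 2, ← Real.rpow_mul (sec_pos hθ).le]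
  norm_num

lemma sin_sub_eq : Real.sin (θ/3 - 2*π/3)
    = -Real.sin (θ/3)/2 - (Real.sqrt 3/2) * Real.cos (θ/3) := by
  rw [Real.sin_sub, show 2*π/3 = π - π/3 by ring, Real.sin_pi_sub, Real.cos_pi_sub,
    Real.sin_pi_div_three, Real.cos_pi_div_three]
  ring

lemma sin_add_eq : Real.sin (θ/3 + 2*π/3)
    = -Real.sin (θ/3)/2 + (Real.sqrt 3/2) * Real.cos (θ/3) := by
  rw [Real.sin_add, show 2*π/3 = π - π/3 by ring, Real.sin_pi_sub, Real.cos_pi_sub,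
    Real.sin_pi_div_three, Real.cos_pi_div_three]
  ring

lemma r1_eq : r₁ θ = (pc θ/4) * (-Real.sin (θ/3) - Real.sqrt 3 * Real.cos (θ/3)) := by
  rw [r₁, sin_sub_eq, pc]; ring

lemma r2_eq : r₂ θ = (pc θ/2) * Real.sin (θ/3) := by
  rw [r₂, pc]; ring

lemma r3_eq : r₃ θ = (pc θ/4) * (Real.sqrt 3 * Real.cos (θ/3) - Real.sin (θ/3)) := by
  rw [r₃, sin_add_eq, pc]; ring

lemma u_lt (hθ : θ ∈ Set.Ioo (-(π/2)) (π/2)) : Real.sin (θ/3) < 1/2 := by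
  have h := Real.strictMonoOn_sin (a := θ/3) (b := π/6)
    ⟨by nlinarith [hθ.1, Real.pi_pos], by nlinarith [hθ.2, Real.pi_pos]⟩
    ⟨by nlinarith [Real.pi_pos], by nlinarith [Real.pi_pos]⟩ (by nlinarith [hθ.2])
  rwa [Real.sin_pi_div_six] at h

lemma u_gt (hθ : θ ∈ Set.Ioo (-(π/2)) (π/2)) : -(1/2) < Real.sin (θ/3) := by
  have h := Real.strictMonoOn_sin (a := -(π/6)) (b := θ/3)
    ⟨by nlinarith [Real.pi_pos], by nlinarith [Real.pi_pos]⟩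
    ⟨by nlinarith [hθ.1, Real.pi_pos], by nlinarith [hθ.2, Real.pi_pos]⟩
    (by nlinarith [hθ.1])
  rwa [Real.sin_neg, Real.sin_pi_div_six] at h

lemma c_gt (hθ : θ ∈ Set.Ioo (-(π/2)) (π/2)) : Real.sqrt 3 / 2 < Real.cos (θ/3) := by
  rw [← Real.cos_abs (θ/3), ← Real.cos_pi_div_six]
  apply Real.cos_lt_cos_of_nonneg_of_le_pi (abs_nonneg _)
    (by nlinarith [Real.pi_pos])
  rw [abs_lt]
  constructor <;> nlinarith [hθ.1, hθ.2, Real.pi_pos]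

lemma qc_gt (hθ : θ ∈ Set.Ioo (-(π/2)) (π/2)) : 3/2 < Real.sqrt 3 * Real.cos (θ/3) := by
  have h3 : (Real.sqrt 3) ^ 2 = 3 := Real.sq_sqrt (by norm_num)
  have h3' : 0 < Real.sqrt 3 := Real.sqrt_pos.2 (by norm_num)
  nlinarith [c_gt hθ]

lemma r2_lt_r3 (hθ : θ ∈ Set.Ioo (-(π/2)) (π/2)) : r₂ θ < r₃ θ := by
  rw [r2_eq, r3_eq]
  have hp := pc_pos hθ
  nlinarith [qc_gt hθ, u_lt hθ]

lemma r1_lt_r2 (hθ : θ ∈ Set.Ioo (-(π/2)) (π/2)) : r₁ θ < r₂ θ := by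
  rw [r2_eq, r1_eq]
  have hp := pc_pos hθ
  nlinarith [qc_gt hθ, u_gt hθ]

lemma key (hθ : θ ∈ Set.Ioo (-(π/2)) (π/2)) (a : ℝ) :
    12 * (sec θ ^ ((2:ℝ)/3)) * a - 64*a^3 - 12*(sec θ ^ ((2:ℝ)/3))*(r₂ θ) + 64*(r₂ θ)^3
      = 64*(r₃ θ - a)*(a - r₂ θ)*(a - r₁ θ) := by
  rw [S_eq hθ, r1_eq, r2_eq, r3_eq]
  set p := pc θ
  set u := Real.sin (θ/3)
  set c := Real.cos (θ/3)
  set q := Real.sqrt 3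
  have h1 : u^2 + c^2 = 1 := Real.sin_sq_add_cos_sq _
  have h2 : q^2 = 3 := Real.sq_sqrt (by norm_num)
  linear_combination (6*p^3*u - 12*p^2*a) * h1 + (2*p^3*u*c^2 - 4*p^2*a*c^2) * h2

lemma key2 (hθ : θ ∈ Set.Ioo (-(π/2)) (π/2)) :
    6 * sec θ ^ ((2:ℝ)/3) - 96*(r₂ θ)^2 = 32*(r₃ θ - r₂ θ)*(r₂ θ - r₁ θ) := by
  rw [S_eq hθ, r1_eq, r2_eq, r3_eq]
  set p := pc θ
  set u := Real.sin (θ/3)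
  set c := Real.cos (θ/3)
  set q := Real.sqrt 3
  have h1 : u^2 + c^2 = 1 := Real.sin_sq_add_cos_sq _
  have h2 : q^2 = 3 := Real.sq_sqrt (by norm_num)
  linear_combination (-6*p^2) * h1 + (-2*p^2*c^2) * h2


variable {θ : ℝ}
variable {f : ℝ → ℝ}

lemma energy (hθ : θ ∈ Set.Ioo (-(π/2)) (π/2))
    (hf : Differentiable ℝ f) (hf' : Differentiable ℝ (deriv f))
    (hODE : ∀ x, deriv (deriv f) x = 6 * (sec θ) ^ ((2:ℝ)/3) - 96 * (f x) ^ 2)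
    (h0 : f 0 = r₂ θ) (h0' : deriv f 0 = 0) (x : ℝ) :
    (deriv f x)^2 = 64*(r₃ θ - f x)*(f x - r₂ θ)*(f x - r₁ θ) := by
  set S := (sec θ) ^ ((2:ℝ)/3) with hS
  set E : ℝ → ℝ := fun x =>
    (deriv f x)^2 - (12*S*(f x) - 64*(f x)^3 - 12*S*(r₂ θ) + 64*(r₂ θ)^3) with hE
  have hD : ∀ y, HasDerivAt E 0 y := by
    intro y
    have h1 : HasDerivAt (fun y => (deriv f y)^2)
        ((2:ℕ) * (deriv f y)^(2-1) * deriv (deriv f) y) y := ((hf' y).hasDerivAt).pow 2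
    have h2 : HasDerivAt (fun y => (f y)^3)
        ((3:ℕ) * (f y)^(3-1) * deriv f y) y := ((hf y).hasDerivAt).pow 3
    have h3 : HasDerivAt (fun y => 12*S*(f y)) (12*S*(deriv f y)) y :=
      ((hf y).hasDerivAt).const_mul _
    have := (h1.sub (((h3.sub (h2.const_mul 64)).sub_const (12*S*(r₂ θ))).add_const
      (64*(r₂ θ)^3)))
    refine this.congr_deriv ?_
    rw [hODE y]
    push_cast
    ring
  have hcon : E x = E 0 :=
    is_const_of_deriv_eq_zero (fun y => (hD y).differentiableAt) (fun y => (hD y).deriv) x 0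
  have hE0 : E 0 = 0 := by simp only [hE, h0, h0']; ring
  have hx0 : E x = 0 := hcon.trans hE0
  simp only [hE] at hx0
  linear_combination hx0 + key hθ (f x)

lemma bounds (hθ : θ ∈ Set.Ioo (-(π/2)) (π/2))
    (hf : Differentiable ℝ f) (hf' : Differentiable ℝ (deriv f))
    (hODE : ∀ x, deriv (deriv f) x = 6 * (sec θ) ^ ((2:ℝ)/3) - 96 * (f x) ^ 2)
    (h0 : f 0 = r₂ θ) (h0' : deriv f 0 = 0) (x : ℝ) :
    r₂ θ ≤ f x ∧ f x ≤ r₃ θ := by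
  have hen := energy hθ hf hf' hODE h0 h0'
  have h12 := r1_lt_r2 hθ
  have h23 := r2_lt_r3 hθ
  have hup : ∀ y, f y ≤ r₃ θ := by
    intro y
    by_contra hy
    push_neg at hy
    have a1 : 0 < f y - r₂ θ := by linarith
    have a2 : 0 < f y - r₁ θ := by linarith
    nlinarith [hen y, sq_nonneg (deriv f y), mul_pos a1 a2]
  refine ⟨?_, hup x⟩
  by_contra hlt
  push_neg at hlt
  have hnotmid : ∀ y, ¬(r₁ θ < f y ∧ f y < r₂ θ) := by
    rintro y ⟨hy1, hy2⟩
    have a1 : 0 < f y - r₁ θ := by linarith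
    have a2 : 0 < r₂ θ - f y := by linarith
    have a3 : 0 < r₃ θ - f y := by linarith
    nlinarith [hen y, sq_nonneg (deriv f y), mul_pos a1 a2, mul_pos (mul_pos a3 a1) a2]
  have hle : f x ≤ r₁ θ := by
    by_contra h
    push_neg at h
    exact hnotmid x ⟨h, hlt⟩
  have hm : (r₁ θ + r₂ θ)/2 ∈ Set.uIcc (f x) (f 0) := by
    rw [Set.mem_uIcc]
    left
    constructor
    · linarith
    · rw [h0]; linarith
  obtain ⟨y, _, hy⟩ := intermediate_value_uIcc (hf.continuous.continuousOn) hm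
  exact hnotmid y (by rw [hy]; constructor <;> linarith)

lemma symm_pt (hθ : θ ∈ Set.Ioo (-(π/2)) (π/2))
    (hf : Differentiable ℝ f) (hf' : Differentiable ℝ (deriv f))
    (hODE : ∀ x, deriv (deriv f) x = 6 * (sec θ) ^ ((2:ℝ)/3) - 96 * (f x) ^ 2)
    (h0 : f 0 = r₂ θ) (h0' : deriv f 0 = 0) (c : ℝ) (hc : deriv f c = 0) :
    ∀ x, f (c + x) = f (c - x) := by
  set S := (sec θ) ^ ((2:ℝ)/3) with hS
  have hbd := bounds hθ hf hf' hODE h0 h0'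
  have hen := energy hθ hf hf' hODE h0 h0'
  have h12 := r1_lt_r2 hθ
  have h23 := r2_lt_r3 hθ
  -- bound on the derivative
  set B : ℝ := 64*(r₃ θ - r₂ θ)*(r₃ θ - r₂ θ)*(r₃ θ - r₁ θ) with hB
  set M : ℝ := Real.sqrt B with hM
  have hDb : ∀ x, |deriv f x| ≤ M := by
    intro x
    have h1 : (deriv f x)^2 ≤ B := by
      have hb1 := (hbd x).1; have hb2 := (hbd x).2
      have p1 : (r₃ θ - f x) * (f x - r₂ θ) ≤ (r₃ θ - r₂ θ) * (r₃ θ - r₂ θ) :=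
        mul_le_mul (by linarith) (by linarith) (by linarith) (by linarith)
      have p2 : (r₃ θ - f x) * (f x - r₂ θ) * (f x - r₁ θ)
          ≤ (r₃ θ - r₂ θ) * (r₃ θ - r₂ θ) * (r₃ θ - r₁ θ) :=
        mul_le_mul p1 (by linarith) (by linarith) (by nlinarith)
      have := hen x
      rw [hB]
      nlinarith [p2]
    calc |deriv f x| = Real.sqrt ((deriv f x)^2) := (Real.sqrt_sq_eq_abs _).symm
    _ ≤ M := Real.sqrt_le_sqrt h1
  set R0 : ℝ := max |r₂ θ| |r₃ θ| with hR0
  have hR0nn : 0 ≤ R0 := le_trans (abs_nonneg _) (le_max_left _ _)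
  set L : NNReal := Real.toNNReal (max 1 (192 * R0)) with hL
  have hLcoe : (L : ℝ) = max 1 (192 * R0) :=
    Real.coe_toNNReal _ (le_trans zero_le_one (le_max_left _ _))
  set KS : Set (ℝ × ℝ) := (Set.Icc (r₂ θ) (r₃ θ)) ×ˢ (Set.Icc (-M) M) with hKS
  set v : ℝ → ℝ × ℝ → ℝ × ℝ := fun _ p => (p.2, 6*S - 96*p.1^2) with hv
  have hLip : ∀ t, LipschitzOnWith L (v t) KS := by
    intro t
    apply LipschitzOnWith.of_dist_le_mul
    intro p hp q hq
    have hp1 : |p.1| ≤ R0 := by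
      rw [abs_le]
      have h1 := hp.1.1; have h2 := hp.1.2
      constructor
      · calc -R0 ≤ -|r₂ θ| := by simp [hR0]
          _ ≤ r₂ θ := neg_abs_le _
          _ ≤ p.1 := h1
      · exact le_trans h2 (le_trans (le_abs_self _) (le_max_right _ _))
    have hq1 : |q.1| ≤ R0 := by
      rw [abs_le]
      have h1 := hq.1.1; have h2 := hq.1.2
      constructor
      · calc -R0 ≤ -|r₂ θ| := by simp [hR0]
          _ ≤ r₂ θ := neg_abs_le _
          _ ≤ q.1 := h1
      · exact le_trans h2 (le_trans (le_abs_self _) (le_max_right _ _))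
    rw [Prod.dist_eq, Prod.dist_eq, hLcoe]
    simp only [hv]
    simp only [Real.dist_eq]
    set d := max |p.1 - q.1| |p.2 - q.2|
    have hd1 : |p.1 - q.1| ≤ d := le_max_left _ _
    have hd2 : |p.2 - q.2| ≤ d := le_max_right _ _
    have hdnn : 0 ≤ d := le_trans (abs_nonneg _) hd1
    apply max_le
    · calc |p.2 - q.2| ≤ 1 * d := by linarith
      _ ≤ max 1 (192*R0) * d := by
        apply mul_le_mul_of_nonneg_right (le_max_left _ _) hdnn
    · have : |6*S - 96*p.1^2 - (6*S - 96*q.1^2)| = 96 * (|q.1 + p.1| * |q.1 - p.1|) := by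
        rw [← abs_mul]
        rw [show (6*S - 96*p.1^2 - (6*S - 96*q.1^2)) = 96 * ((q.1+p.1)*(q.1-p.1)) by ring,
          abs_mul]
        simp [abs_of_nonneg]
      rw [this]
      have h1 : |q.1 + p.1| ≤ 2 * R0 := by
        calc |q.1 + p.1| ≤ |q.1| + |p.1| := abs_add_le _ _
        _ ≤ 2 * R0 := by linarith
      have h2 : |q.1 - p.1| = |p.1 - q.1| := abs_sub_comm _ _
      calc 96 * (|q.1 + p.1| * |q.1 - p.1|)
          ≤ 96 * ((2*R0) * d) := by
            apply mul_le_mul_of_nonneg_left _ (by norm_num)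
            apply mul_le_mul h1 (h2 ▸ hd1) (abs_nonneg _) (by linarith)
      _ = (192 * R0) * d := by ring
      _ ≤ max 1 (192*R0) * d := mul_le_mul_of_nonneg_right (le_max_right _ _) hdnn
  intro x
  set g : ℝ → ℝ × ℝ := fun y => (f (c + y), deriv f (c + y)) with hg
  set h : ℝ → ℝ × ℝ := fun y => (f (c - y), -deriv f (c - y)) with hh
  have hgd : ∀ y, HasDerivAt g (v y (g y)) y := by
    intro y
    have i1 : HasDerivAt (fun y : ℝ => c + y) 1 y := (hasDerivAt_id y).const_add c
    have e1 : HasDerivAt (fun y => f (c + y)) (deriv f (c + y)) y := by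
      have := HasDerivAt.comp y ((hf (c+y)).hasDerivAt) i1
      rw [mul_one] at this
      exact this
    have e2 : HasDerivAt (fun y => deriv f (c + y)) (6*S - 96*(f (c+y))^2) y := by
      have := HasDerivAt.comp y ((hf' (c+y)).hasDerivAt) i1
      rw [mul_one, hODE (c+y)] at this
      exact this
    exact e1.prodMk e2
  have hhd : ∀ y, HasDerivAt h (v y (h y)) y := by
    intro y
    have i1 : HasDerivAt (fun y : ℝ => c - y) (-1) y := by
      simpa using (hasDerivAt_id y).const_sub c
    have e1 : HasDerivAt (fun y => f (c - y)) (-deriv f (c - y)) y := by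
      have := HasDerivAt.comp y ((hf (c-y)).hasDerivAt) i1
      rw [mul_neg_one] at this
      exact this
    have e2 : HasDerivAt (fun y => -deriv f (c - y)) (6*S - 96*(f (c-y))^2) y := by
      have := (HasDerivAt.comp y ((hf' (c-y)).hasDerivAt) i1).neg
      rw [mul_neg_one, neg_neg, hODE (c-y)] at this
      exact this
    exact e1.prodMk e2
  have hmem : ∀ (z : ℝ), (f z, deriv f z) ∈ KS ∧ (f z, -deriv f z) ∈ KS := by
    intro z
    have h1 := hbd z
    have h2 := abs_le.1 (hDb z)
    constructor
    · exact Set.mem_prod.2 ⟨⟨h1.1, h1.2⟩, ⟨h2.1, h2.2⟩⟩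
    · refine Set.mem_prod.2 ⟨⟨h1.1, h1.2⟩, ?_⟩
      simp only [Set.mem_Icc]
      constructor <;> linarith [h2.1, h2.2]
  have heq0 : g 0 = h 0 := by
    simp only [hg, hh, add_zero, sub_zero, hc]
    norm_num
  have hxb : x ∈ Set.Ioo (-(|x|+1)) (|x|+1) := by
    constructor
    · nlinarith [neg_abs_le x, abs_nonneg x]
    · nlinarith [le_abs_self x]
  have h0b : (0:ℝ) ∈ Set.Ioo (-(|x|+1)) (|x|+1) := by
    constructor <;> nlinarith [abs_nonneg x]
  have := ODE_solution_unique_of_mem_Ioo (v := v) (s := fun _ => KS) (K := L) (fun t _ => hLip t) h0b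
    (f := g) (g := h)
    (fun t _ => ⟨hgd t, (hmem (c+t)).1⟩)
    (fun t _ => ⟨hhd t, (hmem (c-t)).2⟩)
    heq0 hxb
  exact congrArg Prod.fst this

variable {θ : ℝ}
variable {f : ℝ → ℝ}
noncomputable def g₀ (θ : ℝ) (a : ℝ) : ℝ :=
  ((r₃ θ - a) * (a - r₂ θ) * (a - r₁ θ)) ^ (-(1:ℝ)/2)

noncomputable def G (θ : ℝ) (b : ℝ) : ℝ := ∫ a in (r₂ θ)..b, g₀ θ a

lemma g0_nonneg (hθ : θ ∈ Set.Ioo (-(π/2)) (π/2)) {a : ℝ}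
    (ha : r₂ θ ≤ a) (ha' : a ≤ r₃ θ) : 0 ≤ g₀ θ a := by
  have h12 := r1_lt_r2 hθ
  apply Real.rpow_nonneg
  have h1 : 0 ≤ r₃ θ - a := by linarith
  have h2 : 0 ≤ a - r₂ θ := by linarith
  have h3 : 0 ≤ a - r₁ θ := by linarith
  exact mul_nonneg (mul_nonneg h1 h2) h3

lemma g0_meas : Measurable (g₀ θ) :=
  (((measurable_const.sub measurable_id).mul (measurable_id.sub measurable_const)).mul
    (measurable_id.sub measurable_const)).pow_const _

lemma int1 (hθ : θ ∈ Set.Ioo (-(π/2)) (π/2)) :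
    IntervalIntegrable (g₀ θ) volume (r₂ θ) (r₃ θ) := by
  have h12 := r1_lt_r2 hθ
  have h23 := r2_lt_r3 hθ
  set m := (r₂ θ + r₃ θ)/2 with hm
  have hm1 : r₂ θ < m := by rw [hm]; linarith
  have hm2 : m < r₃ θ := by rw [hm]; linarith
  have half1 : IntervalIntegrable (g₀ θ) volume (r₂ θ) m := by
    rw [intervalIntegrable_iff_integrableOn_Ioc_of_le hm1.le]
    set C : ℝ := ((r₃ θ - m) * (r₂ θ - r₁ θ)) ^ (-(1:ℝ)/2) with hC
    have hCnn : 0 ≤ C := Real.rpow_nonneg (by nlinarith) _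
    have hbig : IntervalIntegrable (fun a => C * (a - r₂ θ) ^ (-(1:ℝ)/2))
        volume (r₂ θ) m := by
      have h1 : IntervalIntegrable (fun x : ℝ => x ^ (-(1:ℝ)/2)) volume 0 (m - r₂ θ) :=
        intervalIntegral.intervalIntegrable_rpow' (by norm_num)
      have h2 := (h1.comp_sub_right (r₂ θ)).const_mul C
      simpa using h2
    rw [intervalIntegrable_iff_integrableOn_Ioc_of_le hm1.le] at hbig
    apply MeasureTheory.Integrable.mono hbig
    · exact g0_meas.aestronglyMeasurable
    · apply Filter.eventually_of_mem (self_mem_ae_restrict measurableSet_Ioc)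
      intro a ha
      have e1 : 0 < r₃ θ - a := by have := ha.2; linarith
      have e2 : 0 < a - r₂ θ := by have := ha.1; linarith
      have e3 : 0 < a - r₁ θ := by have := ha.1; linarith
      have hsplit : g₀ θ a
          = ((r₃ θ - a) * (a - r₁ θ)) ^ (-(1:ℝ)/2) * (a - r₂ θ) ^ (-(1:ℝ)/2) := by
        rw [g₀, show (r₃ θ - a) * (a - r₂ θ) * (a - r₁ θ)
          = ((r₃ θ - a) * (a - r₁ θ)) * (a - r₂ θ) by ring,
          Real.mul_rpow (by positivity) e2.le]
      have hb1 : ((r₃ θ - a) * (a - r₁ θ)) ^ (-(1:ℝ)/2) ≤ C := by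
        rw [hC]
        apply Real.rpow_le_rpow_of_nonpos (by nlinarith)
        · have := ha.1; have := ha.2
          apply mul_le_mul (by linarith) (by linarith) (by linarith) (by linarith)
        · norm_num
      rw [Real.norm_eq_abs, Real.norm_eq_abs, hsplit,
        abs_of_nonneg (by positivity),
        abs_of_nonneg (mul_nonneg hCnn (Real.rpow_nonneg e2.le _))]
      exact mul_le_mul_of_nonneg_right hb1 (Real.rpow_nonneg e2.le _)
  have half2 : IntervalIntegrable (g₀ θ) volume m (r₃ θ) := by
    rw [intervalIntegrable_iff_integrableOn_Ioc_of_le hm2.le]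
    set C : ℝ := ((m - r₂ θ) * (m - r₁ θ)) ^ (-(1:ℝ)/2) with hC
    have hCnn : 0 ≤ C := Real.rpow_nonneg (by nlinarith) _
    have hbig : IntervalIntegrable (fun a => C * (r₃ θ - a) ^ (-(1:ℝ)/2))
        volume m (r₃ θ) := by
      have h1 : IntervalIntegrable (fun x : ℝ => x ^ (-(1:ℝ)/2)) volume 0 (r₃ θ - m) :=
        intervalIntegral.intervalIntegrable_rpow' (by norm_num)
      have h2 := ((h1.comp_sub_left (r₃ θ)).symm.const_mul C)
      simpa using h2
    rw [intervalIntegrable_iff_integrableOn_Ioc_of_le hm2.le] at hbig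
    apply MeasureTheory.Integrable.mono hbig
    · exact g0_meas.aestronglyMeasurable
    · apply Filter.eventually_of_mem (self_mem_ae_restrict measurableSet_Ioc)
      intro a ha
      have e1 : 0 ≤ r₃ θ - a := by have := ha.2; linarith
      have e2 : 0 < a - r₂ θ := by have := ha.1; linarith
      have e3 : 0 < a - r₁ θ := by have := ha.1; linarith
      have hsplit : g₀ θ a
          = ((a - r₂ θ) * (a - r₁ θ)) ^ (-(1:ℝ)/2) * (r₃ θ - a) ^ (-(1:ℝ)/2) := by
        rw [g₀, show (r₃ θ - a) * (a - r₂ θ) * (a - r₁ θ)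
          = ((a - r₂ θ) * (a - r₁ θ)) * (r₃ θ - a) by ring,
          Real.mul_rpow (by positivity) e1]
      have hb1 : ((a - r₂ θ) * (a - r₁ θ)) ^ (-(1:ℝ)/2) ≤ C := by
        rw [hC]
        apply Real.rpow_le_rpow_of_nonpos (by nlinarith)
        · have := ha.1
          apply mul_le_mul (by linarith) (by linarith) (by linarith) (by linarith)
        · norm_num
      rw [Real.norm_eq_abs, Real.norm_eq_abs, hsplit,
        abs_of_nonneg (by positivity),
        abs_of_nonneg (mul_nonneg hCnn (Real.rpow_nonneg e1 _))]
      exact mul_le_mul_of_nonneg_right hb1 (Real.rpow_nonneg e1 _)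
  exact half1.trans half2

lemma int_sub (hθ : θ ∈ Set.Ioo (-(π/2)) (π/2)) {b1 b2 : ℝ}
    (h1 : b1 ∈ Set.Icc (r₂ θ) (r₃ θ)) (h2 : b2 ∈ Set.Icc (r₂ θ) (r₃ θ)) :
    IntervalIntegrable (g₀ θ) volume b1 b2 := by
  apply (int1 hθ).mono_set
  rw [Set.uIcc_of_le (r2_lt_r3 hθ).le]
  exact Set.uIcc_subset_Icc h1 h2

lemma Gcont (hθ : θ ∈ Set.Ioo (-(π/2)) (π/2)) :
    ContinuousOn (G θ) (Set.Icc (r₂ θ) (r₃ θ)) := by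
  have := intervalIntegral.continuousOn_primitive_interval' (int1 hθ) Set.left_mem_uIcc
  rwa [Set.uIcc_of_le (r2_lt_r3 hθ).le] at this

lemma Gle (hθ : θ ∈ Set.Ioo (-(π/2)) (π/2)) {b : ℝ}
    (hb : b ∈ Set.Icc (r₂ θ) (r₃ θ)) : G θ b ≤ G θ (r₃ θ) := by
  have hdiff : G θ (r₃ θ) - G θ b = ∫ a in b..(r₃ θ), g₀ θ a :=
    intervalIntegral.integral_interval_sub_left (int1 hθ)
      (int_sub hθ (Set.left_mem_Icc.2 (r2_lt_r3 hθ).le) hb)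
  have hnn : 0 ≤ ∫ a in b..(r₃ θ), g₀ θ a := by
    apply intervalIntegral.integral_nonneg hb.2
    intro u hu
    exact g0_nonneg hθ (le_trans hb.1 hu.1) hu.2
  linarith [hdiff, hnn]

lemma rho_eq (hθ : θ ∈ Set.Ioo (-(π/2)) (π/2)) : ρp θ = (1/8) * G θ (r₃ θ) := by
  rw [ρp, G, intervalIntegral.integral_of_le (r2_lt_r3 hθ).le,
    MeasureTheory.integral_Ioc_eq_integral_Ioo]
  rfl
namespace Part4
open SolEP Set Filter Topology
variable {θ : ℝ} {f : ℝ → ℝ}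

lemma point8 (hθ : θ ∈ Set.Ioo (-(π/2)) (π/2))
    (hf : Differentiable ℝ f) (hf' : Differentiable ℝ (deriv f))
    (hODE : ∀ x, deriv (deriv f) x = 6 * (sec θ) ^ ((2:ℝ)/3) - 96 * (f x) ^ 2)
    (h0 : f 0 = r₂ θ) (h0' : deriv f 0 = 0) {t : ℝ} (ht : 0 < deriv f t) :
    deriv f t * g₀ θ (f t) = 8 := by
  have hen := energy hθ hf hf' hODE h0 h0' t
  have hprod : 0 < (r₃ θ - f t) * (f t - r₂ θ) * (f t - r₁ θ) := by
    nlinarith [pow_pos ht 2]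
  set prod := (r₃ θ - f t) * (f t - r₂ θ) * (f t - r₁ θ) with hpr
  have h1 : (prod ^ ((1:ℝ)/2))^2 = prod := by
    rw [← Real.rpow_natCast (prod ^ ((1:ℝ)/2)) 2, ← Real.rpow_mul hprod.le]
    norm_num
  have hp : 0 < prod ^ ((1:ℝ)/2) := Real.rpow_pos_of_pos hprod _
  have hzero : (deriv f t - 8*prod^((1:ℝ)/2)) * (deriv f t + 8*prod^((1:ℝ)/2)) = 0 := by
    linear_combination hen - 64 * h1
  have hDeq : deriv f t = 8 * prod ^ ((1:ℝ)/2) := by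
    rcases mul_eq_zero.1 hzero with h | h
    · linarith
    · nlinarith
  have hg : g₀ θ (f t) = (prod ^ ((1:ℝ)/2))⁻¹ := by
    rw [g₀, show (-(1:ℝ)/2) = -((1:ℝ)/2) by norm_num, Real.rpow_neg hprod.le]
  rw [hg, hDeq]
  field_simp

lemma hsub (hθ : θ ∈ Set.Ioo (-(π/2)) (π/2))
    (hf : Differentiable ℝ f) (hf' : Differentiable ℝ (deriv f))
    (hODE : ∀ x, deriv (deriv f) x = 6 * (sec θ) ^ ((2:ℝ)/3) - 96 * (f x) ^ 2)
    (h0 : f 0 = r₂ θ) (h0' : deriv f 0 = 0) {x₀ x : ℝ} (h0x : 0 < x₀) (hxx : x₀ ≤ x)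
    (hpos : ∀ y ∈ Set.Icc x₀ x, 0 < deriv f y) :
    8 * (x - x₀) = G θ (f x) - G θ (f x₀) := by
  have him : ∀ y ∈ Set.uIcc x₀ x, r₂ θ < f y ∧ f y < r₃ θ := by
    intro y hy
    rw [Set.uIcc_of_le hxx] at hy
    have hD := hpos y hy
    have hen := energy hθ hf hf' hODE h0 h0' y
    have hb := bounds hθ hf hf' hODE h0 h0' y
    constructor
    · rcases eq_or_lt_of_le hb.1 with heq | hlt
      · rw [← heq] at hen
        nlinarith [pow_pos hD 2]
      · exact hlt
    · rcases eq_or_lt_of_le hb.2 with heq | hlt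
      · rw [heq] at hen
        nlinarith [pow_pos hD 2]
      · exact hlt
  have hcv : (∫ t in x₀..x, deriv f t • (g₀ θ ∘ f) t) = ∫ u in (f x₀)..(f x), g₀ θ u := by
    apply intervalIntegral.integral_comp_smul_deriv'' (hf.continuous.continuousOn)
      (fun t _ => (hf t).hasDerivAt.hasDerivWithinAt)
      (hf'.continuous.continuousOn)
    intro y hy
    obtain ⟨t, ht, rfl⟩ := hy
    have h1 := him t ht
    have hpp : (0:ℝ) < (r₃ θ - f t) * (f t - r₂ θ) * (f t - r₁ θ) := by
      have h12 := r1_lt_r2 hθ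
      have e1 : 0 < r₃ θ - f t := by linarith [h1.2]
      have e2 : 0 < f t - r₂ θ := by linarith [h1.1]
      have e3 : 0 < f t - r₁ θ := by linarith [h1.1]
      exact mul_pos (mul_pos e1 e2) e3
    apply ContinuousAt.continuousWithinAt
    show ContinuousAt (fun a => ((r₃ θ - a) * (a - r₂ θ) * (a - r₁ θ)) ^ (-(1:ℝ)/2)) (f t)
    exact ContinuousAt.rpow_const (by fun_prop) (Or.inl (ne_of_gt hpp))
  have hlhs : (∫ t in x₀..x, deriv f t • (g₀ θ ∘ f) t) = 8 * (x - x₀) := by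
    rw [intervalIntegral.integral_congr
      (g := fun _ => (8:ℝ)) ?_, intervalIntegral.integral_const]
    · simp [mul_comm]
    · intro t ht
      rw [Set.uIcc_of_le hxx] at ht
      exact point8 hθ hf hf' hODE h0 h0' (hpos t ht)
  have hb1 := bounds hθ hf hf' hODE h0 h0' x₀
  have hb2 := bounds hθ hf hf' hODE h0 h0' x
  have hrhs : G θ (f x) - G θ (f x₀) = ∫ u in (f x₀)..(f x), g₀ θ u :=
    intervalIntegral.integral_interval_sub_left
      (int_sub hθ (Set.left_mem_Icc.2 (r2_lt_r3 hθ).le) ⟨hb2.1, hb2.2⟩)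
      (int_sub hθ (Set.left_mem_Icc.2 (r2_lt_r3 hθ).le) ⟨hb1.1, hb1.2⟩)
  rw [hrhs, ← hcv, hlhs]

lemma claim8 (hθ : θ ∈ Set.Ioo (-(π/2)) (π/2))
    (hf : Differentiable ℝ f) (hf' : Differentiable ℝ (deriv f))
    (hODE : ∀ x, deriv (deriv f) x = 6 * (sec θ) ^ ((2:ℝ)/3) - 96 * (f x) ^ 2)
    (h0 : f 0 = r₂ θ) (h0' : deriv f 0 = 0) {x : ℝ} (hx : 0 < x)
    (hpos : ∀ y ∈ Set.Ioc 0 x, 0 < deriv f y) :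
    8 * x = G θ (f x) := by
  have hev : (fun x₀ : ℝ => 8*(x - x₀)) =ᶠ[𝓝[>] (0:ℝ)]
      (fun x₀ => G θ (f x) - G θ (f x₀)) := by
    filter_upwards [Ioc_mem_nhdsGT hx] with x₀ hx₀
    exact hsub hθ hf hf' hODE h0 h0' hx₀.1 hx₀.2
      (fun y hy => hpos y ⟨lt_of_lt_of_le hx₀.1 hy.1, hy.2⟩)
  have t1 : Tendsto (fun x₀ : ℝ => 8*(x - x₀)) (𝓝[>] (0:ℝ)) (𝓝 (8 * x)) := by
    have hcont : Continuous fun x₀ : ℝ => 8*(x - x₀) := by continuity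
    have := hcont.tendsto 0
    simp only [sub_zero] at this
    exact this.mono_left nhdsWithin_le_nhds
  have hGf0 : Tendsto (fun x₀ => G θ (f x₀)) (𝓝[>] (0:ℝ)) (𝓝 0) := by
    have hmem : f 0 ∈ Set.Icc (r₂ θ) (r₃ θ) := by
      rw [h0]; exact Set.left_mem_Icc.2 (r2_lt_r3 hθ).le
    have hc : ContinuousWithinAt (fun y => G θ (f y)) (Set.Ioi 0) 0 :=
      ContinuousWithinAt.comp ((Gcont hθ) (f 0) hmem)
        (hf.continuous.continuousWithinAt)
        (fun y _ => ⟨(bounds hθ hf hf' hODE h0 h0' y).1,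
          (bounds hθ hf hf' hODE h0 h0' y).2⟩)
    have h00 : G θ (f 0) = 0 := by rw [h0, G, intervalIntegral.integral_same]
    rw [ContinuousWithinAt, h00] at hc
    exact hc
  have t2 : Tendsto (fun x₀ => G θ (f x) - G θ (f x₀)) (𝓝[>] (0:ℝ))
      (𝓝 (G θ (f x) - 0)) := tendsto_const_nhds.sub hGf0
  have := tendsto_nhds_unique (t1.congr' hev) t2
  linarith [this]

lemma deriv_rho (hθ : θ ∈ Set.Ioo (-(π/2)) (π/2))
    (hf : Differentiable ℝ f) (hf' : Differentiable ℝ (deriv f))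
    (hODE : ∀ x, deriv (deriv f) x = 6 * (sec θ) ^ ((2:ℝ)/3) - 96 * (f x) ^ 2)
    (h0 : f 0 = r₂ θ) (h0' : deriv f 0 = 0) :
    deriv f (ρp θ) = 0 := by
  have h12 := r1_lt_r2 hθ
  have h23 := r2_lt_r3 hθ
  have hev0 : ∀ᶠ y in 𝓝[>] (0:ℝ), 0 < deriv f y := by
    have hc : 0 < 6 * (sec θ) ^ ((2:ℝ)/3) - 96*(r₂ θ)^2 := by
      rw [key2 hθ]; nlinarith
    have hD0 : HasDerivAt (deriv f) (6 * (sec θ) ^ ((2:ℝ)/3) - 96*(r₂ θ)^2) 0 := by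
      have := (hf' 0).hasDerivAt
      rwa [hODE 0, h0] at this
    rw [hasDerivAt_iff_tendsto_slope] at hD0
    have hmono : 𝓝[>] (0:ℝ) ≤ 𝓝[≠] (0:ℝ) :=
      nhdsWithin_mono 0 (fun y hy => ne_of_gt hy)
    have hevs := (hD0.mono_left hmono).eventually (eventually_gt_nhds hc)
    filter_upwards [hevs, self_mem_nhdsWithin] with y hy1 hy2
    rw [slope_def_field, h0', sub_zero, sub_zero] at hy1
    have hy2' : (0:ℝ) < y := hy2
    have := mul_pos hy1 hy2'
    rwa [div_mul_cancel₀ _ (ne_of_gt hy2')] at this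
  obtain ⟨δ, hδmem, hδ⟩ := mem_nhdsGT_iff_exists_Ioo_subset.1 hev0
  have hδpos : (0:ℝ) < δ := hδmem
  have hIVT : ∀ y, 0 < y → deriv f y < 0 → ∃ z, 0 < z ∧ z ≤ y ∧ deriv f z = 0 := by
    intro y hy hneg
    set w := min (δ/2) y with hw
    have hwpos : 0 < w := lt_min (by linarith) hy
    have hwδ : w < δ := lt_of_le_of_lt (min_le_left _ _) (by linarith)
    have hwy : w ≤ y := min_le_right _ _
    have hwD : 0 < deriv f w := hδ ⟨hwpos, hwδ⟩
    have h0mem : (0:ℝ) ∈ Set.Icc (deriv f y) (deriv f w) := ⟨hneg.le, hwD.le⟩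
    obtain ⟨z, hz, hz0⟩ := intermediate_value_Icc' hwy
      (hf'.continuous.continuousOn) h0mem
    exact ⟨z, lt_of_lt_of_le hwpos hz.1, hz.2, hz0⟩
  by_cases hZ : {x : ℝ | 0 < x ∧ deriv f x = 0}.Nonempty
  · have hbdd : BddBelow {x : ℝ | 0 < x ∧ deriv f x = 0} := ⟨0, fun z hz => hz.1.le⟩
    set T := sInf {x : ℝ | 0 < x ∧ deriv f x = 0} with hT
    have hTz : deriv f T = 0 := by
      have h1 : T ∈ closure {x : ℝ | 0 < x ∧ deriv f x = 0} := csInf_mem_closure hZ hbdd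
      have h2 : IsClosed {x : ℝ | deriv f x = 0} :=
        isClosed_eq (hf'.continuous) continuous_const
      exact closure_minimal (fun z hz => hz.2) h2 h1
    have hδT : δ ≤ T := by
      apply le_csInf hZ
      intro z hz
      by_contra h
      push_neg at h
      have h2 : 0 < deriv f z := hδ ⟨hz.1, h⟩
      rw [hz.2] at h2
      exact lt_irrefl 0 h2
    have hTpos : 0 < T := lt_of_lt_of_le hδpos hδT
    have hposT : ∀ y ∈ Set.Ioo 0 T, 0 < deriv f y := by
      intro y hy
      rcases lt_trichotomy (deriv f y) 0 with h | h | h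
      · obtain ⟨z, hz1, hz2, hz3⟩ := hIVT y hy.1 h
        have := csInf_le hbdd (Set.mem_setOf.2 ⟨hz1, hz3⟩)
        rw [← hT] at this
        linarith [hy.2]
      · have := csInf_le hbdd (Set.mem_setOf.2 ⟨hy.1, h⟩)
        rw [← hT] at this
        linarith [hy.2]
      · exact h
    have heq8 : ∀ x ∈ Set.Ioo 0 T, 8*x = G θ (f x) := fun x hx =>
      claim8 hθ hf hf' hODE h0 h0' hx.1
        (fun y hy => hposT y ⟨hy.1, lt_of_le_of_lt hy.2 hx.2⟩)
    have t1 : Tendsto (fun x : ℝ => 8*x) (𝓝[<] T) (𝓝 (8*T)) :=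
      ((continuous_const.mul continuous_id).tendsto T).mono_left nhdsWithin_le_nhds
    have t2 : Tendsto (fun x => G θ (f x)) (𝓝[<] T) (𝓝 (G θ (f T))) := by
      have hmem : f T ∈ Set.Icc (r₂ θ) (r₃ θ) :=
        ⟨(bounds hθ hf hf' hODE h0 h0' T).1, (bounds hθ hf hf' hODE h0 h0' T).2⟩
      exact ContinuousWithinAt.comp ((Gcont hθ) (f T) hmem)
        (hf.continuous.continuousWithinAt)
        (fun y _ => ⟨(bounds hθ hf hf' hODE h0 h0' y).1,
          (bounds hθ hf hf' hODE h0 h0' y).2⟩)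
    have hevT : (fun x : ℝ => 8*x) =ᶠ[𝓝[<] T] (fun x => G θ (f x)) := by
      filter_upwards [Ioo_mem_nhdsLT_of_mem (Set.mem_Ioc.2 ⟨hTpos, le_refl T⟩)]
        with x hx using heq8 x hx
    have h8T : 8*T = G θ (f T) := tendsto_nhds_unique (t1.congr' hevT) t2
    have hmonof : StrictMonoOn f (Set.Icc 0 T) :=
      strictMonoOn_of_deriv_pos (convex_Icc 0 T) (hf.continuous.continuousOn)
        (by rw [interior_Icc]; exact hposT)
    have hfT : r₂ θ < f T := by
      have := hmonof (Set.left_mem_Icc.2 hTpos.le) (Set.right_mem_Icc.2 hTpos.le) hTpos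
      rwa [h0] at this
    have henT := energy hθ hf hf' hODE h0 h0' T
    rw [hTz] at henT
    have hfT3 : f T = r₃ θ := by
      rcases eq_or_lt_of_le (bounds hθ hf hf' hODE h0 h0' T).2 with h | h
      · exact h
      · exfalso
        have e1 : 0 < r₃ θ - f T := by linarith
        have e2 : 0 < f T - r₂ θ := by linarith
        have e3 : 0 < f T - r₁ θ := by linarith
        nlinarith [mul_pos (mul_pos e1 e2) e3]
    rw [hfT3] at h8T
    have hρT : ρp θ = T := by
      rw [rho_eq hθ, ← h8T]; ring
    rw [hρT]
    exact hTz
  · exfalso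
    have hDpos : ∀ y, 0 < y → 0 < deriv f y := by
      intro y hy
      rcases lt_trichotomy (deriv f y) 0 with h | h | h
      · obtain ⟨z, hz1, _, hz3⟩ := hIVT y hy h
        exact absurd ⟨z, hz1, hz3⟩ hZ
      · exact absurd ⟨y, hy, h⟩ hZ
      · exact h
    have hGnn : 0 ≤ G θ (r₃ θ) := by
      have h1 := Gle hθ (Set.left_mem_Icc.2 (r2_lt_r3 hθ).le)
      have h2 : G θ (r₂ θ) = 0 := intervalIntegral.integral_same
      linarith
    set x := (G θ (r₃ θ))/8 + 1 with hxdef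
    have hx : 0 < x := by rw [hxdef]; linarith
    have h8 := claim8 hθ hf hf' hODE h0 h0' hx (fun y hy => hDpos y hy.1)
    have hle := Gle hθ ⟨(bounds hθ hf hf' hODE h0 h0' x).1,
      (bounds hθ hf hf' hODE h0 h0' x).2⟩
    rw [hxdef] at h8
    linarith

end Part4

end SolEP

/-- The solution `f` of `f'' = 6 (sec θ)^{2/3} − 96 f²`, `f(0) = r₂(θ)`,
`f'(0) = 0` is even and periodic of period `2ρ₊(θ)`. -/
theorem solution_even_periodic (θ : ℝ) (hθ : θ ∈ Set.Ioo (-(π/2)) (π/2))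
    (f : ℝ → ℝ) (hf : Differentiable ℝ f) (hf' : Differentiable ℝ (deriv f))
    (hODE : ∀ x, deriv (deriv f) x = 6 * (sec θ) ^ ((2:ℝ)/3) - 96 * (f x) ^ 2)
    (h0 : f 0 = r₂ θ) (h0' : deriv f 0 = 0) :
    (∀ x, f (-x) = f x) ∧ (∀ x, f (x + 2 * ρp θ) = f x) := by
  have heven : ∀ y, f (-y) = f y := by
    intro y
    have h := SolEP.symm_pt hθ hf hf' hODE h0 h0' 0 h0' y
    rw [zero_add, zero_sub] at h
    exact h.symm
  refine ⟨heven, ?_⟩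
  intro x
  have hρ := SolEP.Part4.deriv_rho hθ hf hf' hODE h0 h0'
  have hsymρ := SolEP.symm_pt hθ hf hf' hODE h0 h0' (ρp θ) hρ
  calc f (x + 2*ρp θ) = f (ρp θ + (x + ρp θ)) := by ring_nf
  _ = f (ρp θ - (x + ρp θ)) := hsymρ _
  _ = f (-x) := by ring_nf
  _ = f x := heven x
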